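/- In a bicapacitated forest of BC-trees (non-bridge blocks have capacity 2, bridge blocks and vertices capacity 1), two vertices u and v of the underlying graph G are biconnected in G if and only if there exists a flow of value 2 from u to v in the BC-tree (ignoring the capacities of u and v themselves). Equivalently for a tree: the path from u to v in the BC-tree has all internal nodes of capacity 2 exactly when u and v are biconnected. -/

import Mathlib

open SimpleGraph

/-- A (candidate) block of `G`: a connected subgraph without a cutvertex. -/
def IsBlock {V : Type*} (G : SimpleGraph V) (B : G.Subgraph) : Prop :=
  B.coe.Connected ∧
    ∀ w : V, (B.deleteVerts {w}).verts.Nonempty → (B.deleteVerts {w}).coe.Connected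

/-- The maximal blocks of `G`. -/
def MaxBlock {V : Type*} (G : SimpleGraph V) : Type _ :=
  {B : G.Subgraph // IsBlock G B ∧ ∀ B', IsBlock G B' → B ≤ B' → B' = B}

/-- The block-cutpoint tree of `G`: nodes are the vertices of `G` together with the
blocks of `G`, a vertex adjacent to a block iff it belongs to it. -/
def BCTree {V : Type*} (G : SimpleGraph V) : SimpleGraph (V ⊕ MaxBlock G) :=
  SimpleGraph.fromRel (fun x y =>
    match x, y with
    | Sum.inl v, Sum.inr B => v ∈ (B.1 : G.Subgraph).verts
    | _, _ => False)

/-- Capacities in the bicapacitated BC-tree: vertex nodes and bridge-block nodes get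
capacity 1, non-bridge block nodes (blocks on at least 3 vertices) get capacity 2. -/
noncomputable def cap {V : Type*} (G : SimpleGraph V) : V ⊕ MaxBlock G → ℕ :=
  Sum.elim (fun _ => 1)
    (fun B => by classical exact if 3 ≤ (B.1 : G.Subgraph).verts.ncard then 2 else 1)

/-- `u` and `v` are biconnected in `G`. -/
def Biconnected15 {V : Type*} (G : SimpleGraph V) (u v : V) : Prop :=
  G.Reachable u v ∧
    (∀ w, ∀ (hu : u ≠ w) (hv : v ≠ w),
      (G.induce {x | x ≠ w}).Reachable ⟨u, hu⟩ ⟨v, hv⟩) ∧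
    ¬ G.IsBridge s(u, v)


section AuxiliaryLemmas

variable {V : Type*} [DecidableEq V] {G : SimpleGraph V} {u v w : V}

/-- deleteVerts distributes over sup -/
lemma delV_sup (H K : G.Subgraph) (s : Set V) :
    (H ⊔ K).deleteVerts s = H.deleteVerts s ⊔ K.deleteVerts s := by
  ext x y
  · simp [Set.mem_diff]; tauto
  · simp only [Subgraph.deleteVerts_adj, Subgraph.sup_adj]
    constructor
    · rintro ⟨hx, hxs, hy, hys, (h | h)⟩
      · exact Or.inl ⟨h.fst_mem, hxs, h.snd_mem, hys, h⟩
      · exact Or.inr ⟨h.fst_mem, hxs, h.snd_mem, hys, h⟩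
    · rintro (⟨hx, hxs, hy, hys, h⟩ | ⟨hx, hxs, hy, hys, h⟩)
      · exact ⟨Or.inl hx, hxs, Or.inl hy, hys, Or.inl h⟩
      · exact ⟨Or.inr hx, hxs, Or.inr hy, hys, Or.inr h⟩

lemma delV_id (H : G.Subgraph) (hw : w ∉ H.verts) : H.deleteVerts {w} = H := by
  ext x y
  · simp only [Subgraph.deleteVerts_verts, Set.mem_diff, Set.mem_singleton_iff, and_iff_left_iff_imp]
    rintro hx rfl; exact hw hx
  · simp only [Subgraph.deleteVerts_adj, Set.mem_singleton_iff]
    refine ⟨fun h => h.2.2.2.2, fun h => ⟨h.fst_mem, ?_, h.snd_mem, ?_, h⟩⟩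
    · rintro rfl; exact hw h.fst_mem
    · rintro rfl; exact hw h.snd_mem

/-- deleting the first vertex of a path's subgraph yields the tail's subgraph -/
lemma delV_cons (h : G.Adj u v) (q : G.Walk v w) (hq : u ∉ q.support) :
    (Walk.cons h q).toSubgraph.deleteVerts {u} = q.toSubgraph := by
  rw [Walk.toSubgraph, delV_sup, delV_id q.toSubgraph (by rwa [Walk.mem_verts_toSubgraph])]
  have h1 : (G.subgraphOfAdj h).deleteVerts {u} = G.singletonSubgraph v := by
    ext x y
    · simp only [Subgraph.deleteVerts_verts, subgraphOfAdj_verts, singletonSubgraph_verts,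
        Set.mem_diff, Set.mem_insert_iff, Set.mem_singleton_iff]
      constructor
      · rintro ⟨(rfl | rfl), h2⟩ <;> simp_all
      · rintro rfl; exact ⟨Or.inr rfl, fun hh => h.ne' hh⟩
    · simp only [Subgraph.deleteVerts_adj, subgraphOfAdj_verts, subgraphOfAdj_adj,
        singletonSubgraph_adj, Set.mem_singleton_iff, Pi.bot_apply]
      constructor
      · rintro ⟨hx, hxs, hy, hys, h2⟩
        rw [Sym2.eq_iff] at h2
        rcases h2 with ⟨rfl, rfl⟩ | ⟨rfl, rfl⟩ <;> simp_all
      · exact fun h => h.elim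
  rw [h1, sup_eq_right.2 (by rw [singletonSubgraph_le_iff]; exact q.start_mem_verts_toSubgraph)]

/-- deleting the start vertex of a nontrivial path leaves the tail subgraph -/
lemma delV_start (P : G.Walk u v) (hP : P.IsPath) (hne : u ≠ v) :
    ∃ (x : V) (R : G.Walk x v), P.toSubgraph.deleteVerts {u} = R.toSubgraph ∧ x ∈ P.support := by
  obtain ⟨x, h, q, rfl⟩ := Walk.exists_eq_cons_of_ne hne P
  rw [Walk.cons_isPath_iff] at hP
  exact ⟨x, q, delV_cons h q hP.2, by simp⟩

/-- middle-deletion: delete interior vertex w of path P, with connected K containing u, v,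
    w ∉ K.verts. -/
lemma delMid (P : G.Walk u v) (hP : P.IsPath) (K : G.Subgraph) (hK : K.Connected)
    (huK : u ∈ K.verts) (hvK : v ∈ K.verts) (hwP : w ∈ P.support) (hwK : w ∉ K.verts)
    (hwu : w ≠ u) (hwv : w ≠ v) :
    ((P.toSubgraph ⊔ K).deleteVerts {w}).Connected := by
  have hsplit := P.take_spec hwP
  have h1 : (P.takeUntil w hwP).IsPath := hP.takeUntil hwP
  have h2 : (P.dropUntil w hwP).IsPath := hP.dropUntil hwP
  -- takeUntil reversed
  obtain ⟨x, R, hR, hxmem⟩ := delV_start (P.takeUntil w hwP).reverse h1.reverse hwu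
  rw [Walk.toSubgraph_reverse] at hR
  obtain ⟨y, S, hS, hymem⟩ := delV_start (P.dropUntil w hwP) h2 hwv
  have hPts : P.toSubgraph = (P.takeUntil w hwP).toSubgraph ⊔ (P.dropUntil w hwP).toSubgraph := by
    conv_lhs => rw [← hsplit]
    exact Walk.toSubgraph_append _ _
  have heq : (P.toSubgraph ⊔ K).deleteVerts {w} = (K ⊔ R.toSubgraph) ⊔ S.toSubgraph := by
    rw [hPts, delV_sup, delV_sup, hR, hS, delV_id K hwK]
    ac_rfl
  rw [heq]
  have c1 : (K ⊔ R.toSubgraph).Connected := by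
    refine Subgraph.connected_sup hK.preconnected R.toSubgraph_connected.preconnected ?_
    rw [Subgraph.verts_inf]
    exact ⟨u, huK, by rw [Walk.mem_verts_toSubgraph]; exact R.end_mem_support⟩
  refine Subgraph.connected_sup c1.preconnected S.toSubgraph_connected.preconnected ?_
  rw [Subgraph.verts_inf]
  exact ⟨v, Or.inl hvK, by rw [Walk.mem_verts_toSubgraph]; exact S.end_mem_support⟩

/-- the union of two internally disjoint u-v paths is a block -/
lemma blockPQ (P Q : G.Walk u v) (hP : P.IsPath) (hQ : Q.IsPath) (hne : u ≠ v)
    (hdisj : ∀ x ∈ P.support, x ∈ Q.support → x = u ∨ x = v) :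
    (P.toSubgraph ⊔ Q.toSubgraph).Connected ∧
    ∀ w : V, ((P.toSubgraph ⊔ Q.toSubgraph).deleteVerts {w}).Connected ∨
      ((P.toSubgraph ⊔ Q.toSubgraph).deleteVerts {w}).verts = ∅ := by
  set B := P.toSubgraph ⊔ Q.toSubgraph with hB
  have hBc : B.Connected := by
    refine Subgraph.connected_sup P.toSubgraph_connected.preconnected Q.toSubgraph_connected.preconnected ?_
    rw [Subgraph.verts_inf]
    exact ⟨u, by rw [Walk.mem_verts_toSubgraph]; exact P.start_mem_support,
      by rw [Walk.mem_verts_toSubgraph]; exact Q.start_mem_support⟩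
  refine ⟨hBc, fun w => ?_⟩
  by_cases hwB : w ∈ B.verts
  · left
    by_cases hwu : w = u
    · subst hwu
      obtain ⟨x, R, hR, _⟩ := delV_start P hP hne
      obtain ⟨y, S, hS, _⟩ := delV_start Q hQ hne
      have : B.deleteVerts {w} = R.toSubgraph ⊔ S.toSubgraph := by
        rw [hB, delV_sup, hR, hS]
      rw [this]
      refine Subgraph.connected_sup R.toSubgraph_connected.preconnected S.toSubgraph_connected.preconnected ?_
      rw [Subgraph.verts_inf]
      exact ⟨v, by rw [Walk.mem_verts_toSubgraph]; exact R.end_mem_support,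
        by rw [Walk.mem_verts_toSubgraph]; exact S.end_mem_support⟩
    by_cases hwv : w = v
    · subst hwv
      obtain ⟨x, R, hR, _⟩ := delV_start P.reverse hP.reverse (Ne.symm hne)
      obtain ⟨y, S, hS, _⟩ := delV_start Q.reverse hQ.reverse (Ne.symm hne)
      rw [Walk.toSubgraph_reverse] at hR hS
      have : B.deleteVerts {w} = R.toSubgraph ⊔ S.toSubgraph := by
        rw [hB, delV_sup, hR, hS]
      rw [this]
      refine Subgraph.connected_sup R.toSubgraph_connected.preconnected S.toSubgraph_connected.preconnected ?_
      rw [Subgraph.verts_inf]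
      exact ⟨u, by rw [Walk.mem_verts_toSubgraph]; exact R.end_mem_support,
        by rw [Walk.mem_verts_toSubgraph]; exact S.end_mem_support⟩
    -- w interior of P or Q
    have hw' : w ∈ P.support ∨ w ∈ Q.support := by
      rw [hB, Subgraph.verts_sup, Set.mem_union, Walk.mem_verts_toSubgraph,
        Walk.mem_verts_toSubgraph] at hwB
      exact hwB
    rcases hw' with hw | hw
    · have hwQ : w ∉ Q.support := fun hq => by
        rcases hdisj w hw hq with rfl | rfl <;> simp_all
      exact delMid P hP Q.toSubgraph Q.toSubgraph_connected
        (by rw [Walk.mem_verts_toSubgraph]; exact Q.start_mem_support)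
        (by rw [Walk.mem_verts_toSubgraph]; exact Q.end_mem_support)
        hw (by rwa [Walk.mem_verts_toSubgraph]) hwu hwv
    · have hwP : w ∉ P.support := fun hp => by
        rcases hdisj w hp hw with rfl | rfl <;> simp_all
      have : B = Q.toSubgraph ⊔ P.toSubgraph := sup_comm _ _
      rw [this]
      exact delMid Q hQ P.toSubgraph P.toSubgraph_connected
        (by rw [Walk.mem_verts_toSubgraph]; exact P.start_mem_support)
        (by rw [Walk.mem_verts_toSubgraph]; exact P.end_mem_support)
        hw (by rwa [Walk.mem_verts_toSubgraph]) hwu hwv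
  · left
    rw [delV_id B hwB]
    exact hBc

/-- Paths can be appended when they meet only at the junction. -/
lemma appendPath {a b c : V} {p : G.Walk a b} {q : G.Walk b c} (hp : p.IsPath) (hq : q.IsPath)
    (h : ∀ x ∈ p.support, x ∈ q.support → x = b) : (p.append q).IsPath := by
  have hq' : q.support = b :: q.support.tail := q.support_eq_cons
  have hqn : q.support.Nodup := hq.support_nodup
  rw [hq'] at hqn
  rw [Walk.isPath_def, Walk.support_append, List.nodup_append]
  refine ⟨hp.support_nodup, (List.nodup_cons.1 hqn).2, fun x hx y hx' hxy => ?_⟩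
  subst hxy
  have hxb : x = b := h x hx (by rw [hq']; exact List.mem_cons_of_mem _ hx')
  subst hxb
  exact (List.nodup_cons.1 hqn).1 hx'

/-- if the endpoint `w` of a path appears in `takeUntil z`, then `z = w`. -/
lemma end_mem_takeUntil {p : G.Walk u w} (hp : p.IsPath) {z : V} (hz : z ∈ p.support)
    (hw : w ∈ (p.takeUntil z hz).support) : z = w := by
  by_contra hne
  have hsplit := p.take_spec hz
  have hnodup : p.support.Nodup := hp.support_nodup
  rw [← hsplit, Walk.support_append, List.nodup_append] at hnodup
  have hwdrop : w ∈ (p.dropUntil z hz).support := Walk.end_mem_support _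
  have : w ∈ (p.dropUntil z hz).support.tail := by
    have := (p.dropUntil z hz).support_eq_cons
    rw [this] at hwdrop
    rcases List.mem_cons.1 hwdrop with h | h
    · exact absurd h.symm hne
    · exact h
  exact hnodup.2.2 w hw w this rfl

/-- prefix of a walk up to the first vertex in S -/
lemma exists_prefix_until (S : Set V) : ∀ {a b : V} (R : G.Walk a b), R.IsPath → b ∈ S →
    ∃ (z : V) (R1 : G.Walk a z), R1.IsPath ∧ z ∈ S ∧ (∀ x ∈ R1.support, x ∈ S → x = z) ∧
      (∀ x ∈ R1.support, x ∈ R.support) := by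
  intro a b R
  induction R with
  | nil => exact fun _ hb => ⟨_, Walk.nil, Walk.IsPath.nil, hb, by simp, by simp⟩
  | @cons a c b h R ih =>
    intro hR hb
    by_cases haS : a ∈ S
    · exact ⟨a, Walk.nil, Walk.IsPath.nil, haS, by simp, by simp⟩
    · obtain ⟨z, R1, h1, h2, h3, h4⟩ := ih ((Walk.cons_isPath_iff h R).1 hR).1 hb
      refine ⟨z, Walk.cons h R1, ?_, h2, ?_, ?_⟩
      · rw [Walk.cons_isPath_iff]
        exact ⟨h1, fun ha => ((Walk.cons_isPath_iff h R).1 hR).2 (h4 a ha)⟩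
      · intro x hx hxS
        rw [Walk.support_cons] at hx
        rcases List.mem_cons.1 hx with rfl | hx
        · exact absurd hxS haS
        · exact h3 x hx hxS
      · intro x hx
        rw [Walk.support_cons] at hx ⊢
        rcases List.mem_cons.1 hx with rfl | hx
        · exact List.mem_cons_self
        · exact List.mem_cons_of_mem _ (h4 x hx)

def TwoPaths (G : SimpleGraph V) (u v : V) : Prop :=
  ∃ (P Q : G.Walk u v), P.IsPath ∧ Q.IsPath ∧
    (∀ x ∈ P.support, x ∈ Q.support → x = u ∨ x = v) ∧
    ∃ t ∈ Q.support, t ≠ u ∧ t ≠ v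


lemma caseA (C1 C2 : G.Walk u w) (hC1 : C1.IsPath) (hC2 : C2.IsPath)
    (hdisj : ∀ x ∈ C1.support, x ∈ C2.support → x = u ∨ x = w)
    (hwv : G.Adj w v) (hv1 : v ∈ C1.support) (hvu : v ≠ u) (hvw : v ≠ w) (hwu : w ≠ u) :
    TwoPaths G u v := by
  have hv2 : v ∉ C2.support := fun h2 => by
    rcases hdisj v hv1 h2 with h | h
    · exact hvu h
    · exact hvw h
  have hQ : (C2.append (Walk.cons hwv Walk.nil)).IsPath := by
    refine appendPath hC2 (by simp [Walk.cons_isPath_iff, hwv.ne, hwv.ne']) ?_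
    intro x hx hx'
    simp only [Walk.support_cons, Walk.support_nil, List.mem_cons, List.mem_singleton] at hx'
    rcases hx' with rfl | rfl | h
    · rfl
    · exact absurd hx hv2
    · exact absurd h (List.not_mem_nil)
  refine ⟨C1.takeUntil v hv1, C2.append (Walk.cons hwv Walk.nil), hC1.takeUntil hv1, hQ, ?_, ?_⟩
  · intro x hx hx'
    have hxC1 : x ∈ C1.support := C1.support_takeUntil_subset hv1 hx
    rw [Walk.mem_support_append_iff] at hx'
    rcases hx' with hx' | hx'
    · rcases hdisj x hxC1 hx' with h | rfl
      · exact Or.inl h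
      · exact absurd (end_mem_takeUntil hC1 hv1 hx) hvw
    · simp only [Walk.support_cons, Walk.support_nil, List.mem_cons, List.mem_singleton] at hx'
      rcases hx' with rfl | rfl | h
      · exact absurd (end_mem_takeUntil hC1 hv1 hx) hvw
      · exact Or.inr rfl
      · exact absurd h (List.not_mem_nil)
  · exact ⟨w, by rw [Walk.mem_support_append_iff]; exact Or.inl C2.end_mem_support, hwu, hwv.ne⟩

lemma assemble (C1 C2 : G.Walk u w) (hC1 : C1.IsPath) (hC2 : C2.IsPath)
    (hdisj : ∀ x ∈ C1.support, x ∈ C2.support → x = u ∨ x = w)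
    (hwv : G.Adj w v) (hv2 : v ∉ C2.support) (hvu : v ≠ u) (hwu : w ≠ u)
    {z : V} (R1 : G.Walk v z) (hR1 : R1.IsPath) (hz : z ∈ C1.support)
    (hR1S : ∀ x ∈ R1.support, (x ∈ C1.support ∨ x ∈ C2.support) → x = z)
    (hwR1 : w ∉ R1.support) :
    TwoPaths G u v := by
  have hzw : z ≠ w := fun h => hwR1 (h ▸ R1.end_mem_support)
  have hQ : (C2.append (Walk.cons hwv Walk.nil)).IsPath := by
    refine appendPath hC2 (by simp [Walk.cons_isPath_iff, hwv.ne, hwv.ne']) ?_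
    intro x hx hx'
    simp only [Walk.support_cons, Walk.support_nil, List.mem_cons, List.mem_singleton] at hx'
    rcases hx' with rfl | rfl | h
    · rfl
    · exact absurd hx hv2
    · exact absurd h (List.not_mem_nil)
  have hP : ((C1.takeUntil z hz).append R1.reverse).IsPath := by
    refine appendPath (hC1.takeUntil hz) hR1.reverse ?_
    intro x hx hx'
    rw [Walk.support_reverse, List.mem_reverse] at hx'
    exact hR1S x hx' (Or.inl (C1.support_takeUntil_subset hz hx))
  refine ⟨(C1.takeUntil z hz).append R1.reverse, C2.append (Walk.cons hwv Walk.nil), hP, hQ, ?_, ?_⟩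
  · intro x hx hx'
    rw [Walk.mem_support_append_iff] at hx hx'
    have hxw : x ≠ w := by
      rintro rfl
      rcases hx with hx | hx
      · exact hzw (end_mem_takeUntil hC1 hz hx)
      · rw [Walk.support_reverse, List.mem_reverse] at hx
        exact hwR1 hx
    rcases hx' with hx' | hx'
    · -- x ∈ C2.support
      rcases hx with hx | hx
      · rcases hdisj x (C1.support_takeUntil_subset hz hx) hx' with h | h
        · exact Or.inl h
        · exact absurd h hxw
      · rw [Walk.support_reverse, List.mem_reverse] at hx
        have hxz : x = z := hR1S x hx (Or.inr hx')
        subst hxz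
        rcases hdisj x hz hx' with h | h
        · exact Or.inl h
        · exact absurd h hxw
    · simp only [Walk.support_cons, Walk.support_nil, List.mem_cons, List.mem_singleton] at hx'
      rcases hx' with rfl | rfl | h
      · exact absurd rfl hxw
      · exact Or.inr rfl
      · exact absurd h (List.not_mem_nil)
  · exact ⟨w, by rw [Walk.mem_support_append_iff]; exact Or.inl C2.end_mem_support, hwu, hwv.ne⟩

lemma menger (G : SimpleGraph V) : ∀ n : ℕ, ∀ u v : V, G.dist u v = n → u ≠ v →
    G.Reachable u v →
    (∀ w, w ≠ u → w ≠ v → ∃ p : G.Walk u v, w ∉ p.support) →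
    (G.Adj u v → ∃ p : G.Walk u v, s(u, v) ∉ p.edges) →
    TwoPaths G u v := by
  intro n
  induction n using Nat.strong_induction_on with
  | _ n IH =>
  intro u v hdist hne hr hsep hbr
  by_cases hadj : G.Adj u v
  · -- adjacent case
    obtain ⟨Q0, hQ0e⟩ := hbr hadj
    refine ⟨Walk.cons hadj Walk.nil, Q0.bypass, by simp [Walk.cons_isPath_iff, hadj.ne],
      Q0.bypass_isPath, ?_, ?_⟩
    · intro x hx _
      simp only [Walk.support_cons, Walk.support_nil, List.mem_cons, List.mem_singleton] at hx
      rcases hx with rfl | rfl | h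
      · exact Or.inl rfl
      · exact Or.inr rfl
      · exact absurd h (List.not_mem_nil)
    · obtain ⟨x, h', Q'', hcons⟩ := Walk.exists_eq_cons_of_ne hne Q0.bypass
      refine ⟨x, ?_, h'.ne', ?_⟩
      · rw [hcons, Walk.support_cons]
        exact List.mem_cons_of_mem _ Q''.start_mem_support
      · rintro rfl
        have : s(u, x) ∈ Q0.bypass.edges := by rw [hcons, Walk.edges_cons]; exact List.mem_cons_self
        exact hQ0e (Q0.edges_bypass_subset this)
  · -- non-adjacent case
    have hn0 : n ≠ 0 := by
      rintro rfl
      rw [dist_eq_zero_iff_eq_or_not_reachable] at hdist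
      rcases hdist with h | h
      · exact hne h
      · exact h hr
    have hn1 : n ≠ 1 := by
      rintro rfl
      exact hadj (dist_eq_one_iff_adj.1 hdist)
    obtain ⟨p0, hp0len⟩ := hr.exists_walk_length_eq_dist
    set p := p0.bypass with hp
    have hplen : p.length = n := by
      have h1 : p.length ≤ p0.length := p0.length_bypass_le
      have h2 : G.dist u v ≤ p.length := G.dist_le p
      omega
    obtain ⟨w, hvw, q, hq⟩ := Walk.exists_eq_cons_of_ne (Ne.symm hne) p.reverse
    have hprev : p.reverse.IsPath := p0.bypass_isPath.reverse
    rw [hq, Walk.cons_isPath_iff] at hprev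
    obtain ⟨hqpath, hvq⟩ := hprev
    have hwv : G.Adj w v := hvw.symm
    have hwu : w ≠ u := by
      rintro rfl
      exact hadj hvw.symm
    have hqlen : q.length = n - 1 := by
      have : p.reverse.length = n := by rw [Walk.length_reverse, hplen]
      rw [hq, Walk.length_cons] at this
      omega
    have hduw : G.dist u w < n := by
      have : G.dist u w ≤ q.length := by
        have := G.dist_le q.reverse
        rwa [Walk.length_reverse] at this
      omega
    have hruw : G.Reachable u w := ⟨q.reverse⟩
    -- hypotheses for the pair (u, w)
    have hsep' : ∀ z, z ≠ u → z ≠ w → ∃ p' : G.Walk u w, z ∉ p'.support := by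
      intro z hzu hzw
      by_cases hzv : z = v
      · subst hzv
        exact ⟨q.reverse, by rwa [Walk.support_reverse, List.mem_reverse]⟩
      · obtain ⟨W, hW⟩ := hsep z hzu hzv
        refine ⟨W.concat hwv.symm, ?_⟩
        rw [Walk.support_concat]
        intro hmem
        rw [List.mem_append, List.mem_singleton] at hmem
        rcases hmem with h | h
        · exact hW h
        · exact hzw h
    have hbr' : G.Adj u w → ∃ p' : G.Walk u w, s(u, w) ∉ p'.edges := by
      intro _
      obtain ⟨W, hW⟩ := hsep w hwu (hwv.ne)
      refine ⟨W.concat hwv.symm, ?_⟩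
      rw [Walk.edges_concat]
      intro hmem
      rw [List.concat_eq_append, List.mem_append, List.mem_singleton] at hmem
      rcases hmem with h | h
      · exact hW (W.snd_mem_support_of_mem_edges h)
      · rw [Sym2.eq_iff] at h
        rcases h with ⟨h1, h2⟩ | ⟨h1, h2⟩
        · exact hne h1
        · exact hwu h1.symm
    obtain ⟨C1, C2, hC1, hC2, hdisj, -⟩ :=
      IH (G.dist u w) hduw u w rfl (Ne.symm hwu) hruw hsep' hbr'
    by_cases hv1 : v ∈ C1.support
    · exact caseA C1 C2 hC1 hC2 hdisj hwv hv1 hne.symm hwv.ne' hwu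
    by_cases hv2 : v ∈ C2.support
    · exact caseA C2 C1 hC2 hC1 (fun x a b => hdisj x b a) hwv hv2 hne.symm hwv.ne' hwu
    · obtain ⟨W, hWw⟩ := hsep w hwu hwv.ne
      have hWw' : w ∉ W.bypass.support := fun h => hWw (W.support_bypass_subset h)
      obtain ⟨z, R1, hR1, hzS, hR1S, hR1sub⟩ :=
        exists_prefix_until {x | x ∈ C1.support ∨ x ∈ C2.support} W.bypass.reverse
          W.bypass_isPath.reverse (Or.inl C1.start_mem_support)
      have hwR1 : w ∉ R1.support := fun h => by
        have := hR1sub w h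
        rw [Walk.support_reverse, List.mem_reverse] at this
        exact hWw' this
      rcases hzS with hz | hz
      · exact assemble C1 C2 hC1 hC2 hdisj hwv hv2 hne.symm hwu R1 hR1 hz
          (fun x hx hxS => hR1S x hx hxS) hwR1
      · exact assemble C2 C1 hC2 hC1 (fun x a b => hdisj x b a) hwv hv1 hne.symm hwu R1 hR1 hz
          (fun x hx hxS => hR1S x hx (Or.symm hxS)) hwR1

/-- the inclusion hom from an induced subgraph -/
def indHom (S : Set V) : (G.induce S) →g G := ⟨Subtype.val, id⟩

lemma exists_block (hbc : Biconnected15 G u v) (hne : u ≠ v) :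
    ∃ B : G.Subgraph, IsBlock G B ∧ u ∈ B.verts ∧ v ∈ B.verts ∧ 3 ≤ B.verts.ncard := by
  obtain ⟨hr, hsep, hbr⟩ := hbc
  have hsep' : ∀ w, w ≠ u → w ≠ v → ∃ p : G.Walk u v, w ∉ p.support := by
    intro w hwu hwv
    obtain ⟨q⟩ := hsep w (Ne.symm hwu) (Ne.symm hwv)
    refine ⟨q.map (indHom {x | x ≠ w}), ?_⟩
    intro hmem
    replace hmem : w ∈ (q.map (indHom {x | x ≠ w})).support := hmem
    rw [Walk.support_map, List.mem_map] at hmem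
    obtain ⟨a, _, ha2⟩ := hmem
    exact a.prop ha2
  have hbr' : G.Adj u v → ∃ p : G.Walk u v, s(u, v) ∉ p.edges := by
    intro hadj
    rw [isBridge_iff, not_not] at hbr
    exact reachable_delete_edges_iff_exists_walk.1 hbr
  obtain ⟨P, Q, hP, hQ, hdisj, t, htQ, htu, htv⟩ :=
    menger G (G.dist u v) u v rfl hne hr hsep' hbr'
  obtain ⟨hconn, hdel⟩ := blockPQ P Q hP hQ hne hdisj
  refine ⟨P.toSubgraph ⊔ Q.toSubgraph, ⟨hconn.coe, fun w hw => ?_⟩, ?_, ?_, ?_⟩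
  · rcases hdel w with h | h
    · exact h.coe
    · rw [h] at hw; exact absurd hw (Set.not_nonempty_empty)
  · rw [Subgraph.verts_sup]
    exact Or.inl (by rw [Walk.mem_verts_toSubgraph]; exact P.start_mem_support)
  · rw [Subgraph.verts_sup]
    exact Or.inl (by rw [Walk.mem_verts_toSubgraph]; exact P.end_mem_support)
  · have hsub : {u, v, t} ⊆ (P.toSubgraph ⊔ Q.toSubgraph).verts := by
      rw [Subgraph.verts_sup]
      rintro x (rfl | rfl | rfl)
      · exact Or.inl (by rw [Walk.mem_verts_toSubgraph]; exact P.start_mem_support)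
      · exact Or.inl (by rw [Walk.mem_verts_toSubgraph]; exact P.end_mem_support)
      · exact Or.inr (by rw [Walk.mem_verts_toSubgraph]; exact htQ)
    have hfin : (P.toSubgraph ⊔ Q.toSubgraph).verts.Finite := by
      rw [Subgraph.verts_sup, Walk.verts_toSubgraph, Walk.verts_toSubgraph]
      exact (P.support.finite_toSet).union (Q.support.finite_toSet)
    have h3 : ({u, v, t} : Set V).ncard = 3 := by
      rw [Set.ncard_eq_three]
      exact ⟨u, v, t, hne, Ne.symm htu, Ne.symm htv, rfl⟩
    calc 3 = ({u, v, t} : Set V).ncard := h3.symm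
      _ ≤ _ := Set.ncard_le_ncard hsub hfin

lemma subgraph_finite [Finite V] : Finite (G.Subgraph) := by
  have : Finite (Set V × (V → V → Prop)) := by infer_instance
  exact Finite.of_injective (fun H : G.Subgraph => (H.verts, H.Adj))
    (fun H K h => by
      obtain ⟨h1, h2⟩ := Prod.mk.injEq .. ▸ h
      exact Subgraph.ext h1 h2)

lemma exists_max_block [Finite V] (B0 : G.Subgraph) (h : IsBlock G B0) :
    ∃ Bm : G.Subgraph, (IsBlock G Bm ∧ ∀ B', IsBlock G B' → Bm ≤ B' → B' = Bm) ∧ B0 ≤ Bm := by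
  have : Finite (G.Subgraph) := subgraph_finite
  have hfin : {B' : G.Subgraph | IsBlock G B' ∧ B0 ≤ B'}.Finite := Set.toFinite _
  obtain ⟨Bm, hBm, hmax⟩ := Set.Finite.exists_maximalFor id _ hfin ⟨B0, h, le_rfl⟩
  refine ⟨Bm, ⟨hBm.1, fun B' hB' hle => ?_⟩, hBm.2⟩
  exact le_antisymm (hmax ⟨hB', le_trans hBm.2 hle⟩ hle) hle

/-- reverse direction: a block with ≥ 3 vertices containing u, v gives biconnectivity -/
lemma biconnected_of_block (hG : G.Connected) (B : G.Subgraph) (hB : IsBlock G B)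
    (hu : u ∈ B.verts) (hv : v ∈ B.verts) (h3 : 3 ≤ B.verts.ncard) (hne : u ≠ v) :
    Biconnected15 G u v := by
  refine ⟨hG.preconnected u v, ?_, ?_⟩
  · intro w hu' hv'
    have hnon : (B.deleteVerts {w}).verts.Nonempty :=
      ⟨u, by rw [Subgraph.deleteVerts_verts]; exact ⟨hu, fun h => hu' h⟩⟩
    have hconn := hB.2 w hnon
    let φ : (B.deleteVerts {w}).coe →g G.induce {x | x ≠ w} :=
      ⟨fun a => ⟨a.1, fun h => a.2.2 h⟩, fun {a b} hab => (B.deleteVerts {w}).adj_sub hab⟩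
    have hreach := hconn.preconnected
      ⟨u, by rw [Subgraph.deleteVerts_verts]; exact ⟨hu, fun h => hu' h⟩⟩
      ⟨v, by rw [Subgraph.deleteVerts_verts]; exact ⟨hv, fun h => hv' h⟩⟩
    exact hreach.map φ
  · intro hbridge
    rw [isBridge_iff] at hbridge
    have hnr := hbridge
    -- third vertex
    have hex : ∃ t ∈ B.verts, t ≠ u ∧ t ≠ v := by
      by_contra hcon
      push_neg at hcon
      have hsub : B.verts ⊆ {u, v} := by
        intro x hx
        rcases eq_or_ne x u with rfl | hxu
        · exact Set.mem_insert _ _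
        · exact Set.mem_insert_of_mem _ (hcon x hx hxu)
      have : B.verts.ncard ≤ 2 := by
        calc B.verts.ncard ≤ ({u, v} : Set V).ncard :=
          Set.ncard_le_ncard hsub ((Set.finite_singleton v).insert u)
        _ = 2 := Set.ncard_pair hne
      omega
    obtain ⟨t, htB, htu, htv⟩ := hex
    -- hom from B minus a vertex into G minus the edge uv
    let ψ : ∀ z : V, (z = u ∨ z = v) → ((B.deleteVerts {z}).coe →g (G \ fromEdgeSet {s(u, v)})) := by
      intro z hz
      refine ⟨fun a => a.1, fun {a b} hab => ?_⟩
      have hadj' := hab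
      rw [Subgraph.coe_adj, Subgraph.deleteVerts_adj] at hadj'
      obtain ⟨ha1, ha2, hb1, hb2, hBadj⟩ := hadj'
      rw [sdiff_adj]
      refine ⟨B.adj_sub hBadj, ?_⟩
      rw [fromEdgeSet_adj]
      rintro ⟨hmem, -⟩
      rw [Set.mem_singleton_iff, Sym2.eq_iff] at hmem
      rw [Set.mem_singleton_iff] at ha2 hb2
      rcases hz with rfl | rfl <;> rcases hmem with ⟨h1, h2⟩ | ⟨h1, h2⟩
      · exact ha2 h1
      · exact hb2 h2
      · exact hb2 h2
      · exact ha2 h1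
    have hr1 : (G \ fromEdgeSet {s(u, v)}).Reachable u t := by
      have hnon : (B.deleteVerts {v}).verts.Nonempty :=
        ⟨u, by rw [Subgraph.deleteVerts_verts]; exact ⟨hu, fun h => hne h⟩⟩
      have hconn := hB.2 v hnon
      have := hconn.preconnected
        ⟨u, by rw [Subgraph.deleteVerts_verts]; exact ⟨hu, fun h => hne h⟩⟩
        ⟨t, by rw [Subgraph.deleteVerts_verts]; exact ⟨htB, fun h => htv h⟩⟩
      exact this.map (ψ v (Or.inr rfl))
    have hr2 : (G \ fromEdgeSet {s(u, v)}).Reachable t v := by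
      have hnon : (B.deleteVerts {u}).verts.Nonempty :=
        ⟨v, by rw [Subgraph.deleteVerts_verts]; exact ⟨hv, fun h => hne h.symm⟩⟩
      have hconn := hB.2 u hnon
      have := hconn.preconnected
        ⟨t, by rw [Subgraph.deleteVerts_verts]; exact ⟨htB, fun h => htu h⟩⟩
        ⟨v, by rw [Subgraph.deleteVerts_verts]; exact ⟨hv, fun h => hne h.symm⟩⟩
      exact this.map (ψ u (Or.inl rfl))
    exact hnr (hr1.trans hr2)

end AuxiliaryLemmas

section BCTLemmas

variable {V : Type*} {G : SimpleGraph V} {u v : V}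

lemma bct_adj_inl_inr {a : V} {B : MaxBlock G} :
    (BCTree G).Adj (Sum.inl a) (Sum.inr B) ↔ a ∈ (B.1 : G.Subgraph).verts := by
  rw [BCTree, fromRel_adj]
  constructor
  · rintro ⟨-, h | h⟩
    · exact h
    · exact h.elim
  · intro h
    exact ⟨by simp, Or.inl h⟩

lemma bct_not_adj_inl_inl {a b : V} : ¬ (BCTree G).Adj (Sum.inl a) (Sum.inl b) := by
  rw [BCTree, fromRel_adj]
  rintro ⟨-, h | h⟩ <;> exact h

lemma bct_not_adj_inr_inr {A B : MaxBlock G} : ¬ (BCTree G).Adj (Sum.inr A) (Sum.inr B) := by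
  rw [BCTree, fromRel_adj]
  rintro ⟨-, h | h⟩ <;> exact h

lemma cap_inl (a : V) : cap G (Sum.inl a) = 1 := rfl

lemma cap_inr (B : MaxBlock G) :
    cap G (Sum.inr B) = if 3 ≤ (B.1 : G.Subgraph).verts.ncard then 2 else 1 := by
  simp [cap]

lemma bct_path_iff (huv : u ≠ v) :
    (∃ p : (BCTree G).Walk (Sum.inl u) (Sum.inl v), p.IsPath ∧
        ∀ x ∈ p.support, x ≠ Sum.inl u → x ≠ Sum.inl v → cap G x = 2) ↔
    ∃ B : MaxBlock G, u ∈ (B.1 : G.Subgraph).verts ∧ v ∈ (B.1 : G.Subgraph).verts ∧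
      3 ≤ (B.1 : G.Subgraph).verts.ncard := by
  constructor
  · rintro ⟨p, hp, hcap⟩
    cases p with
    | nil => exact absurd rfl huv
    | cons h1 p1 =>
      rename_i x1
      cases x1 with
      | inl a => exact absurd h1 bct_not_adj_inl_inl
      | inr B =>
        have huB : u ∈ (B.1 : G.Subgraph).verts := bct_adj_inl_inr.1 h1
        cases p1 with
        | cons h2 p2 =>
          rename_i x2
          cases x2 with
          | inr B' => exact absurd h2 bct_not_adj_inr_inr
          | inl b =>
            have hbB : b ∈ (B.1 : G.Subgraph).verts := bct_adj_inl_inr.1 h2.symm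
            cases p2 with
            | nil =>
              refine ⟨B, huB, hbB, ?_⟩
              have hc := hcap (Sum.inr B) (by simp) (by simp) (by simp)
              rw [cap_inr] at hc
              by_contra h3
              rw [if_neg h3] at hc
              exact absurd hc (by norm_num)
            | cons h3 p3 =>
              -- inl b is an internal vertex with capacity 1
              exfalso
              have hmem : (Sum.inl b : V ⊕ MaxBlock G) ∈
                  (Walk.cons h1 (Walk.cons h2 (Walk.cons h3 p3))).support := by
                simp [Walk.support_cons]
              have hbu : (Sum.inl b : V ⊕ MaxBlock G) ≠ Sum.inl u := by
                intro h
                rw [Walk.isPath_def] at hp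
                simp only [Walk.support_cons, List.nodup_cons] at hp
                exact hp.1 (by rw [← h]; simp [Walk.support_cons])
              have hbv : (Sum.inl b : V ⊕ MaxBlock G) ≠ Sum.inl v := by
                intro h
                rw [Walk.isPath_def] at hp
                simp only [Walk.support_cons, List.nodup_cons] at hp
                exact hp.2.2.1 (by rw [h]; exact p3.end_mem_support)
              have := hcap _ hmem hbu hbv
              rw [cap_inl] at this
              exact absurd this (by norm_num)
  · rintro ⟨B, huB, hvB, h3⟩
    have h1 : (BCTree G).Adj (Sum.inl u) (Sum.inr B) := bct_adj_inl_inr.2 huB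
    have h2 : (BCTree G).Adj (Sum.inr B) (Sum.inl v) := (bct_adj_inl_inr.2 hvB).symm
    refine ⟨Walk.cons h1 (Walk.cons h2 Walk.nil), ?_, ?_⟩
    · rw [Walk.isPath_def]
      simp only [Walk.support_cons, Walk.support_nil, List.nodup_cons, List.mem_cons,
        List.mem_singleton, List.not_mem_nil]
      refine ⟨?_, ?_, ?_⟩
      · rintro (h | h | h)
        · exact absurd h (by simp)
        · exact huv (Sum.inl.inj h)
        · exact h
      · rintro (h | h)
        · exact absurd h (by simp)
        · exact h
      · simp
    · intro x hx hxu hxv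
      simp only [Walk.support_cons, Walk.support_nil, List.mem_cons, List.mem_singleton,
        List.not_mem_nil, or_false] at hx
      rcases hx with rfl | rfl | rfl
      · exact absurd rfl hxu
      · rw [cap_inr, if_pos h3]
      · exact absurd rfl hxv

end BCTLemmas

/-- In the bicapacitated BC-tree of a connected graph `G`, two distinct vertices `u`,
`v` are biconnected in `G` iff there is a flow of value 2 from `u` to `v` in the
BC-tree (ignoring the capacities of `u`, `v`), equivalently iff the BC-tree path from
`u` to `v` has all internal nodes of capacity 2. -/
theorem stmt15 {V : Type*} [Fintype V] (G : SimpleGraph V) (hG : G.Connected)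
    (u v : V) (huv : u ≠ v) :
    Biconnected15 G u v ↔
      ∃ p : (BCTree G).Walk (Sum.inl u) (Sum.inl v), p.IsPath ∧
        ∀ x ∈ p.support, x ≠ Sum.inl u → x ≠ Sum.inl v → cap G x = 2 := by
  classical
  have key : Biconnected15 G u v ↔ ∃ B : MaxBlock G, u ∈ (B.1 : G.Subgraph).verts ∧
      v ∈ (B.1 : G.Subgraph).verts ∧ 3 ≤ (B.1 : G.Subgraph).verts.ncard := by
    constructor
    · intro hbc
      obtain ⟨B0, hB0, hu0, hv0, h30⟩ := exists_block hbc huv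
      obtain ⟨Bm, hBm, hle⟩ := exists_max_block B0 hB0
      refine ⟨(⟨Bm, hBm⟩ : {B : G.Subgraph // IsBlock G B ∧ ∀ B', IsBlock G B' → B ≤ B' → B' = B}),
        hle.1 hu0, hle.1 hv0, ?_⟩
      calc 3 ≤ B0.verts.ncard := h30
        _ ≤ Bm.verts.ncard := Set.ncard_le_ncard hle.1 (Set.toFinite _)
    · rintro ⟨B, huB, hvB, h3⟩
      exact biconnected_of_block hG B.1 B.2.1 huB hvB h3 huv
  exact key.trans (bct_path_iff huv).symm
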